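/- For all real t ≥ 1 and all v with 0 ≤ v ≤ 1, exp(v·(1-v)·(1/t - 1)²/2) ≤ ((1-v) + v·t)/t^v. -/

import Mathlib

open Real

theorem stmt4 (t v : ℝ) (ht : 1 ≤ t) (hv0 : 0 ≤ v) (hv1 : v ≤ 1) :
    Real.exp (v * (1 - v) * (1 / t - 1) ^ 2 / 2) ≤ ((1 - v) + v * t) / t ^ v := by
  have ht0 : (0:ℝ) < t := lt_of_lt_of_le one_pos ht
  have h1v : 0 ≤ 1 - v := sub_nonneg.2 hv1
  have hA : ∀ x : ℝ, 1 ≤ x → 0 < (1 - v) + v * x := by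
    intro x hx; nlinarith
  set g : ℝ → ℝ := fun x =>
    Real.log ((1 - v) + v * x) - v * Real.log x - v * (1 - v) * (1 / x - 1) ^ 2 / 2 with hg
  have hder : ∀ x : ℝ, 1 ≤ x →
      HasDerivAt g
        (v * (1 - v) * (x - 1) * (x ^ 2 - ((1 - v) + v * x)) / (((1 - v) + v * x) * x ^ 3)) x := by
    intro x hx
    have hx0 : (0:ℝ) < x := lt_of_lt_of_le one_pos hx
    have hxne : x ≠ 0 := ne_of_gt hx0
    have hAx : (1 - v) + v * x ≠ 0 := ne_of_gt (hA x hx)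
    have h1 : HasDerivAt (fun y : ℝ => (1 - v) + v * y) v x := by
      simpa using ((hasDerivAt_id x).const_mul v).const_add (1 - v)
    have hlogA : HasDerivAt (fun y : ℝ => Real.log ((1 - v) + v * y))
        (v / ((1 - v) + v * x)) x := h1.log hAx
    have hlogx : HasDerivAt (fun y : ℝ => v * Real.log y) (v * x⁻¹) x :=
      (Real.hasDerivAt_log hxne).const_mul v
    have hu : HasDerivAt (fun y : ℝ => 1 / y - 1) (-(x ^ 2)⁻¹) x := by
      simpa [one_div] using (hasDerivAt_inv hxne).sub_const 1
    have hsq := hu.pow 2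
    have hlast := (hsq.const_mul (v * (1 - v))).div_const 2
    have := (hlogA.sub hlogx).sub hlast
    refine this.congr_deriv ?_
    norm_num
    field_simp
    ring
  have hmono : MonotoneOn g (Set.Ici 1) := by
    apply monotoneOn_of_deriv_nonneg (convex_Ici 1)
    · exact fun x hx => ((hder x hx).continuousAt).continuousWithinAt
    · intro x hx
      rw [interior_Ici] at hx
      exact ((hder x (le_of_lt hx)).differentiableAt).differentiableWithinAt
    · intro x hx
      rw [interior_Ici] at hx
      rw [(hder x (le_of_lt hx)).deriv]
      have hx1 : (1:ℝ) ≤ x := le_of_lt hx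
      have hx0 : (0:ℝ) < x := lt_of_lt_of_le one_pos hx1
      apply div_nonneg
      · have h2 : 0 ≤ x ^ 2 - ((1 - v) + v * x) := by nlinarith
        have h3 : 0 ≤ x - 1 := sub_nonneg.2 hx1
        positivity
      · positivity
  have hg1 : g 1 = 0 := by simp [hg]
  have hgt : 0 ≤ g t := by
    rw [← hg1]
    exact hmono (by simp) (by simpa using ht) ht
  have hglet : v * (1 - v) * (1 / t - 1) ^ 2 / 2 ≤
      Real.log ((1 - v) + v * t) - v * Real.log t := by
    simp only [hg] at hgt; linarith
  calc Real.exp (v * (1 - v) * (1 / t - 1) ^ 2 / 2)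
      ≤ Real.exp (Real.log ((1 - v) + v * t) - v * Real.log t) := Real.exp_le_exp.2 hglet
    _ = ((1 - v) + v * t) / t ^ v := by
        rw [Real.exp_sub, Real.exp_log (hA t ht), Real.rpow_def_of_pos ht0]
        ring_nf
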